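/- With $A, \Gamma_A, L_A$ and the Blaschke coefficients $U_0 = -AL_A^{1/2}$, $U_j = A^{*(j-1)}\Gamma_A^{-1}L_A^{1/2}$ ($j\ge1$) as above, for every $n \ge 1$ the shifted sequence is orthogonal to the original: $\sum_{j=0}^\infty U_j^* U_{j+n}' = 0$, where $U'$ denotes the coefficients of $Z^n U_A(Z)$; explicitly, $-L_A^{1/2}\Gamma_A^{-1}A^{n-1}AL_A^{1/2} + \sum_{j=0}^\infty L_A^{1/2}\Gamma_A^{-1}A^{n+j}A^{*j}\Gamma_A^{-1}L_A^{1/2} = 0$. -/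

import Mathlib

open scoped ENNReal NNReal Matrix ComplexOrder

attribute [local instance] Matrix.linftyOpNormedRing Matrix.linftyOpNormedAlgebra

/-- The positive semidefinite square root of a positive semidefinite matrix
(the definition `Matrix.PosSemidef.sqrt` of the older Mathlib, since removed). -/
noncomputable def Matrix.PosSemidef.sqrt {n : Type*} [Fintype n] [DecidableEq n] {𝕜 : Type*} [RCLike 𝕜]
    {A : Matrix n n 𝕜} (hA : A.PosSemidef) : Matrix n n 𝕜 :=
  hA.1.eigenvectorUnitary.1 * Matrix.diagonal ((↑) ∘ (√·) ∘ hA.1.eigenvalues) *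
    (star hA.1.eigenvectorUnitary : Matrix n n 𝕜)

open Filter in
lemma aux_geom_bound {p : ℕ} (A : Matrix (Fin p) (Fin p) ℂ)
    (hA : spectralRadius ℂ A < 1) :
    ∃ r : ℝ≥0, r < 1 ∧ ∀ᶠ k in atTop, ‖A ^ k‖₊ ≤ r ^ k := by
  obtain ⟨r, hr1, hr2⟩ := exists_between hA
  lift r to ℝ≥0 using hr2.ne_top
  refine ⟨r, by exact_mod_cast hr2, ?_⟩
  have h := spectrum.pow_nnnorm_pow_one_div_tendsto_nhds_spectralRadius A
  have h2 : ∀ᶠ k : ℕ in atTop, (‖A ^ k‖₊ : ℝ≥0∞) ^ (1 / (k : ℝ)) < (r : ℝ≥0∞) :=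
    h.eventually_lt_const hr1
  filter_upwards [h2, eventually_ge_atTop 1] with k hk hk1
  have hk0 : (k : ℝ) ≠ 0 := by positivity
  have h3 := ENNReal.rpow_le_rpow hk.le (by positivity : (0 : ℝ) ≤ (k : ℝ))
  rw [← ENNReal.rpow_mul, one_div, inv_mul_cancel₀ hk0, ENNReal.rpow_one,
    ENNReal.rpow_natCast] at h3
  exact_mod_cast h3

lemma aux_conjT_bound {p : ℕ} (B : Matrix (Fin p) (Fin p) ℂ) :
    ‖Bᴴ‖₊ ≤ p * ‖B‖₊ := by
  rw [Matrix.linfty_opNNNorm_def]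
  refine Finset.sup_le fun i _ => ?_
  calc ∑ j, ‖Bᴴ i j‖₊ ≤ ∑ _j : Fin p, ‖B‖₊ := by
        refine Finset.sum_le_sum fun j _ => ?_
        rw [Matrix.conjTranspose_apply, nnnorm_star]
        calc ‖B j i‖₊ ≤ ∑ c, ‖B j c‖₊ :=
              Finset.single_le_sum (f := fun c => ‖B j c‖₊) (fun c _ => zero_le) (Finset.mem_univ i)
          _ ≤ ‖B‖₊ := by
              rw [Matrix.linfty_opNNNorm_def]
              exact Finset.le_sup (f := fun a => ∑ c, ‖B a c‖₊) (Finset.mem_univ j)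
    _ = p * ‖B‖₊ := by simp [Finset.sum_const, Finset.card_univ]

open Filter in
lemma aux_summable {p : ℕ} (A : Matrix (Fin p) (Fin p) ℂ)
    (hA : spectralRadius ℂ A < 1) :
    Summable (fun j : ℕ => A ^ j * Aᴴ ^ j) := by
  obtain ⟨r, hr1, hr2⟩ := aux_geom_bound A hA
  refine Summable.of_norm_bounded_eventually_nat (g := fun j => (p : ℝ) * ((r : ℝ) ^ 2) ^ j) ?_ ?_
  · refine Summable.mul_left _ (summable_geometric_of_lt_one (by positivity) ?_)
    have : (r : ℝ) < 1 := hr1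
    nlinarith [r.coe_nonneg]
  · filter_upwards [hr2] with k hk
    have h1 : ‖A ^ k * Aᴴ ^ k‖₊ ≤ ‖A ^ k‖₊ * ‖Aᴴ ^ k‖₊ := Matrix.linfty_opNNNorm_mul _ _
    have h2 : ‖Aᴴ ^ k‖₊ ≤ p * ‖A ^ k‖₊ := by
      rw [← Matrix.conjTranspose_pow]
      exact aux_conjT_bound _
    have h3 : ‖A ^ k * Aᴴ ^ k‖₊ ≤ p * (r ^ k * r ^ k) := by
      calc ‖A ^ k * Aᴴ ^ k‖₊ ≤ ‖A ^ k‖₊ * (p * ‖A ^ k‖₊) := h1.trans (by gcongr)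
        _ ≤ r ^ k * (p * r ^ k) := by gcongr
        _ = p * (r ^ k * r ^ k) := by ring
    calc ‖A ^ k * Aᴴ ^ k‖ = ((‖A ^ k * Aᴴ ^ k‖₊ : ℝ≥0) : ℝ) := rfl
      _ ≤ ((p * (r ^ k * r ^ k) : ℝ≥0) : ℝ) := by exact_mod_cast h3
      _ = (p : ℝ) * ((r : ℝ) ^ 2) ^ k := by push_cast; ring

/-- Orthogonality of the Blaschke factor to its shifts: for every `n ≥ 1`,
`-L^{1/2} Γ⁻¹ A^{n-1} A L^{1/2} + ∑ⱼ L^{1/2} Γ⁻¹ A^{n+j} A*ʲ Γ⁻¹ L^{1/2} = 0`. -/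
theorem stmt9 {p : ℕ} (A : Matrix (Fin p) (Fin p) ℂ)
    (hA : spectralRadius ℂ A < 1)
    (Γ : Matrix (Fin p) (Fin p) ℂ) (hΓ : Γ = ∑' n : ℕ, A ^ n * Aᴴ ^ n)
    (L : Matrix (Fin p) (Fin p) ℂ) (hL : L⁻¹ = Aᴴ * A + Γ⁻¹)
    (hLpsd : L.PosSemidef)
    (n : ℕ) (hn : 1 ≤ n) :
    -(hLpsd.sqrt * Γ⁻¹ * A ^ (n - 1) * A * hLpsd.sqrt) +
      ∑' j : ℕ, hLpsd.sqrt * Γ⁻¹ * A ^ (n + j) * Aᴴ ^ j * Γ⁻¹ * hLpsd.sqrt = 0 := by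
  by_cases hdet : IsUnit Γ.det
  · have hGG : Γ * Γ⁻¹ = 1 := Matrix.mul_nonsing_inv _ hdet
    have hsum := aux_summable A hA
    have hAn : A ^ (n - 1) * A = A ^ n := by
      conv_rhs => rw [show n = (n - 1) + 1 by omega]
      rw [pow_succ]
    have hterm : ∀ j : ℕ,
        hLpsd.sqrt * Γ⁻¹ * A ^ (n + j) * Aᴴ ^ j * Γ⁻¹ * hLpsd.sqrt =
          (hLpsd.sqrt * Γ⁻¹ * A ^ n) * ((A ^ j * Aᴴ ^ j) * (Γ⁻¹ * hLpsd.sqrt)) := by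
      intro j
      rw [pow_add]
      noncomm_ring
    have hsum' : Summable fun j : ℕ => (A ^ j * Aᴴ ^ j) * (Γ⁻¹ * hLpsd.sqrt) :=
      hsum.mul_right _
    calc -(hLpsd.sqrt * Γ⁻¹ * A ^ (n - 1) * A * hLpsd.sqrt) +
          ∑' j : ℕ, hLpsd.sqrt * Γ⁻¹ * A ^ (n + j) * Aᴴ ^ j * Γ⁻¹ * hLpsd.sqrt
        = -(hLpsd.sqrt * Γ⁻¹ * A ^ n * hLpsd.sqrt) +
          (hLpsd.sqrt * Γ⁻¹ * A ^ n) *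
            ((∑' j : ℕ, A ^ j * Aᴴ ^ j) * (Γ⁻¹ * hLpsd.sqrt)) := by
          rw [mul_assoc (hLpsd.sqrt * Γ⁻¹) _ A, hAn, ← mul_assoc]
          congr 1
          rw [tsum_congr hterm, hsum'.tsum_mul_left, hsum.tsum_mul_right]
          simp [mul_assoc]
      _ = 0 := by
          rw [← hΓ, ← mul_assoc Γ, hGG, one_mul]
          simp [mul_assoc]
  · have h0 : Γ⁻¹ = 0 := Matrix.nonsing_inv_apply_not_isUnit _ hdet
    simp [h0]
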